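/- Let χ ∈ [0,1], let s̃, l̃ ∈ ℝ² be orthonormal vectors and set T̃ = χ s̃⊗s̃ + l̃⊗l̃. Let f_A : [0,∞) → ℝ be continuously differentiable and not constant on (0,∞). Then the anisotropic attraction force field F_A(d) = f_A(|d|) T̃ d on ℝ² is conservative — i.e. there exists a differentiable function W : ℝ² → ℝ with ∇W(d) = F_A(d) for all d ∈ ℝ² — if and only if χ = 1. -/

import Mathlib

open InnerProductSpace Set

/-- For the anisotropic attraction force
`F_A(d) = f_A(‖d‖) T̃ d` with `T̃ = χ s̃⊗s̃ + l̃⊗l̃` built from orthonormal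
vectors `s̃, l̃ ∈ ℝ²`, where `f_A` is continuously differentiable on `[0,∞)` and
not constant on `(0,∞)`, the force is conservative (i.e. there is a
differentiable potential `W` with `∇W = F_A` everywhere) if and only if `χ = 1`. -/
theorem attraction_force_conservative_iff_chi_eq_one
    (χ : ℝ) (hχ : χ ∈ Set.Icc (0 : ℝ) 1)
    (s l : EuclideanSpace ℝ (Fin 2))
    (hs : ‖s‖ = 1) (hl : ‖l‖ = 1) (hsl : (inner ℝ s l : ℝ) = 0)
    (fA : ℝ → ℝ) (hfA : ContDiffOn ℝ 1 fA (Set.Ici 0))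
    (hfA_nonconst : ¬ ∃ cst : ℝ, ∀ ρ ∈ Set.Ioi (0 : ℝ), fA ρ = cst) :
    (∃ W : EuclideanSpace ℝ (Fin 2) → ℝ,
      ∀ d : EuclideanSpace ℝ (Fin 2),
        HasGradientAt W
          (fA ‖d‖ • ((χ * (inner ℝ s d : ℝ)) • s + (inner ℝ l d : ℝ) • l)) d)
      ↔ χ = 1 := by
  have hss : (inner ℝ s s : ℝ) = 1 := by rw [real_inner_self_eq_norm_sq, hs]; norm_num
  have hll : (inner ℝ l l : ℝ) = 1 := by rw [real_inner_self_eq_norm_sq, hl]; norm_num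
  have hls : (inner ℝ l s : ℝ) = 0 := by rw [real_inner_comm]; exact hsl
  -- inner products against combinations
  have hin_s : ∀ a b : ℝ, (inner ℝ s (a • s + b • l) : ℝ) = a := by
    intro a b
    rw [inner_add_right, real_inner_smul_right, real_inner_smul_right, hss, hsl]; ring
  have hin_l : ∀ a b : ℝ, (inner ℝ l (a • s + b • l) : ℝ) = b := by
    intro a b
    rw [inner_add_right, real_inner_smul_right, real_inner_smul_right, hll, hls]; ring
  have hnorm : ∀ a b : ℝ, ‖a • s + b • l‖ = Real.sqrt (a ^ 2 + b ^ 2) := by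
    intro a b
    have h2 : (inner ℝ (a • s + b • l) (a • s + b • l) : ℝ) = a ^ 2 + b ^ 2 := by
      rw [inner_add_left, real_inner_smul_left, real_inner_smul_left, hin_s, hin_l]; ring
    rw [← Real.sqrt_sq (norm_nonneg (a • s + b • l)), ← real_inner_self_eq_norm_sq, h2]
  constructor
  · -- forward direction
    rintro ⟨W, hW⟩
    by_contra hχ1
    have hχlt : 1 - χ ≠ 0 := fun h => hχ1 (by linarith)
    -- derivative along curves
    set F : (EuclideanSpace ℝ (Fin 2)) → (EuclideanSpace ℝ (Fin 2)) := fun d =>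
      fA ‖d‖ • ((χ * (inner ℝ s d : ℝ)) • s + (inner ℝ l d : ℝ) • l) with hF
    have key : ∀ (γ : ℝ → (EuclideanSpace ℝ (Fin 2))) (v : (EuclideanSpace ℝ (Fin 2))) (t : ℝ), HasDerivAt γ v t →
        HasDerivAt (fun t => W (γ t)) ((inner ℝ (F (γ t)) v : ℝ)) t := by
      intro γ v t hγ
      have h := ((hW (γ t)).hasFDerivAt).comp_hasDerivAt t hγ
      rw [← toDual_apply_apply (𝕜 := ℝ)]
      exact h
    have hFinner : ∀ d v : (EuclideanSpace ℝ (Fin 2)), (inner ℝ (F d) v : ℝ) =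
        fA ‖d‖ * (χ * (inner ℝ s d : ℝ) * (inner ℝ s v : ℝ)
          + (inner ℝ l d : ℝ) * (inner ℝ l v : ℝ)) := by
      intro d v
      rw [hF]
      rw [real_inner_smul_left, inner_add_left, real_inner_smul_left, real_inner_smul_left]
    -- the radial antiderivative
    set P : ℝ → ℝ := fun r => ∫ t in (0:ℝ)..r, t * fA |t| with hPdef
    have hgc : Continuous fun t : ℝ => t * fA |t| :=
      continuous_id.mul ((hfA.continuousOn).comp_continuous continuous_abs fun x => abs_nonneg x)
    have hP : ∀ r : ℝ, HasDerivAt P (r * fA |r|) r := fun r =>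
      (hgc.integral_hasStrictDerivAt 0 r).hasDerivAt
    have hP0 : P 0 = 0 := by simp [hPdef]
    -- along rays
    have ray : ∀ (u : (EuclideanSpace ℝ (Fin 2))) (cs cl : ℝ), (inner ℝ s u : ℝ) = cs → (inner ℝ l u : ℝ) = cl →
        ‖u‖ = 1 → ∀ r : ℝ, W (r • u) = W 0 + (χ * cs ^ 2 + cl ^ 2) * P r := by
      intro u cs cl hcs hcl hu r
      set m : ℝ := χ * cs ^ 2 + cl ^ 2 with hm
      set D : ℝ → ℝ := fun t => W (t • u) - m * P t with hD
      have hDd : ∀ t : ℝ, HasDerivAt D 0 t := by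
        intro t
        have hγ : HasDerivAt (fun t : ℝ => t • u) u t := by
          simpa using (hasDerivAt_id t).smul_const u
        have h1 := key _ u t hγ
        have hval : (inner ℝ (F (t • u)) u : ℝ) = m * (t * fA |t|) := by
          rw [hFinner]
          rw [real_inner_smul_right, real_inner_smul_right, hcs, hcl,
            norm_smul, hu, Real.norm_eq_abs, mul_one, hm]
          ring
        rw [hval] at h1
        have h4 := h1.sub ((hP t).const_mul m)
        simp only [sub_self] at h4
        exact h4
      have hconst := is_const_of_deriv_eq_zero (fun t => (hDd t).differentiableAt)
        (fun t => (hDd t).deriv) r 0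
      have : W (r • u) - m * P r = W ((0:ℝ) • u) - m * P 0 := hconst
      rw [zero_smul, hP0] at this
      linarith [this]
    have rayS : ∀ r : ℝ, W (r • s) = W 0 + χ * P r := by
      intro r
      have := ray s 1 0 hss hls hs r
      simpa using this
    have rayL : ∀ r : ℝ, W (r • l) = W 0 + P r := by
      intro r
      have := ray l 0 1 hsl hll hl r
      simpa using this
    -- along circles
    have circle : ∀ r : ℝ, 0 ≤ r →
        W (r • l) = W (r • s) + fA r * r ^ 2 * (1 - χ) / 2 := by
      intro r hr
      set c : ℝ := fA r * r ^ 2 * (1 - χ) / 2 with hc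
      set γ : ℝ → (EuclideanSpace ℝ (Fin 2)) := fun t => (r * Real.cos t) • s + (r * Real.sin t) • l with hγdef
      set D : ℝ → ℝ := fun t => W (γ t) - c * Real.sin t ^ 2 with hD
      have hnγ : ∀ t : ℝ, ‖γ t‖ = r := by
        intro t
        rw [hγdef, hnorm]
        have : (r * Real.cos t) ^ 2 + (r * Real.sin t) ^ 2 = r ^ 2 := by
          have := Real.sin_sq_add_cos_sq t; nlinarith [this]
        rw [this, Real.sqrt_sq hr]
      have hDd : ∀ t : ℝ, HasDerivAt D 0 t := by
        intro t
        have hγ' : HasDerivAt γ ((r * -Real.sin t) • s + (r * Real.cos t) • l) t :=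
          (((Real.hasDerivAt_cos t).const_mul r).smul_const s).add
            (((Real.hasDerivAt_sin t).const_mul r).smul_const l)
        have h1 := key γ _ t hγ'
        have hval : (inner ℝ (F (γ t)) ((r * -Real.sin t) • s + (r * Real.cos t) • l) : ℝ)
            = c * (2 * Real.sin t * Real.cos t) := by
          rw [hFinner, hnγ, hγdef]
          rw [hin_s, hin_l, hin_s, hin_l, hc]
          ring
        rw [hval] at h1
        have h2 : HasDerivAt (fun t : ℝ => c * Real.sin t ^ 2)
            (c * (2 * Real.sin t ^ 1 * Real.cos t)) t :=
          ((Real.hasDerivAt_sin t).pow 2).const_mul c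
        have h3 := h1.sub h2
        simp only [pow_one, sub_self] at h3
        exact h3
      have hconst := is_const_of_deriv_eq_zero (fun t => (hDd t).differentiableAt)
        (fun t => (hDd t).deriv) (Real.pi / 2) 0
      have hq : D (Real.pi / 2) = D 0 := hconst
      rw [hD] at hq
      simp only [hγdef, Real.cos_pi_div_two, Real.sin_pi_div_two, Real.cos_zero,
        Real.sin_zero, mul_zero, mul_one, zero_smul, zero_add, add_zero] at hq
      have h0 : (0:ℝ) ^ 2 = 0 := by norm_num
      rw [one_pow, h0, mul_zero, sub_zero, mul_one] at hq
      linarith [hq]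
    -- combine: P r = fA r * r^2 / 2 for r > 0
    have hkey : ∀ r : ℝ, 0 < r → P r = fA r * r ^ 2 / 2 := by
      intro r hr
      have h1 := circle r hr.le
      rw [rayS, rayL] at h1
      have h2 : (1 - χ) * (P r - fA r * r ^ 2 / 2) = 0 := by linarith [h1]
      have h3 := mul_eq_zero.mp h2
      rcases h3 with h | h
      · exact absurd h hχlt
      · linarith [h]
    -- fA is constant on (0,∞): contradiction
    set g : ℝ → ℝ := fun r => 2 * P r / r ^ 2 with hgdef
    have hfg : ∀ r : ℝ, 0 < r → fA r = g r := by
      intro r hr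
      have hgr : g r = 2 * P r / r ^ 2 := rfl
      rw [hgr, hkey r hr]
      field_simp
    have hg0 : ∀ r : ℝ, 0 < r → HasDerivAt g 0 r := by
      intro r hr
      have hd := ((hP r).const_mul 2).div (hasDerivAt_pow 2 r) (pow_ne_zero 2 hr.ne')
      have habs : |r| = r := abs_of_pos hr
      have hPr : P r = fA r * r ^ 2 / 2 := hkey r hr
      refine hd.congr_deriv ?_
      symm
      rw [habs, hPr]
      field_simp
      ring
    have hgconst : ∀ x y : ℝ, 0 < x → 0 < y → x ≤ y → g y = g x := by
      intro x y hx hy hxy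
      have hcont : ContinuousOn g (Icc x y) := fun t ht =>
        ((hg0 t (lt_of_lt_of_le hx ht.1)).differentiableAt.continuousAt).continuousWithinAt
      have hderiv : ∀ t ∈ Ico x y, HasDerivWithinAt g 0 (Ici t) t := fun t ht =>
        (hg0 t (lt_of_lt_of_le hx ht.1)).hasDerivWithinAt
      exact constant_of_has_deriv_right_zero hcont hderiv y ⟨hxy, le_refl y⟩
    refine hfA_nonconst ⟨fA 1, fun ρ hρ => ?_⟩
    have hρ0 : (0:ℝ) < ρ := hρ
    have h1 : (0:ℝ) < 1 := one_pos
    rcases le_total ρ 1 with h | h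
    · rw [hfg ρ hρ0, hfg 1 h1, hgconst ρ 1 hρ0 h1 h]
    · rw [hfg ρ hρ0, hfg 1 h1, hgconst 1 ρ h1 hρ0 h]
  · -- backward direction
    intro hχ1
    subst hχ1
    -- with χ = 1 the force is radial: F d = fA ‖d‖ • d
    have hdecomp : ∀ d : EuclideanSpace ℝ (Fin 2),
        (inner ℝ s d : ℝ) • s + (inner ℝ l d : ℝ) • l = d := by
      intro d
      have hon : Orthonormal ℝ ![s, l] := by
        rw [orthonormal_iff_ite]
        intro i j
        fin_cases i <;> fin_cases j <;>
          simp only [Matrix.cons_val_zero, Matrix.cons_val_one, Matrix.head_cons] <;>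
          norm_num [hss, hll, hsl, hls, hs, hl]
      have hspan : ⊤ ≤ Submodule.span ℝ (Set.range ![s, l]) := by
        rw [hon.linearIndependent.span_eq_top_of_card_eq_finrank (by simp)]
      let B : OrthonormalBasis (Fin 2) ℝ (EuclideanSpace ℝ (Fin 2)) :=
        OrthonormalBasis.mk hon hspan
      have hsum := B.sum_repr d
      rw [Fin.sum_univ_two] at hsum
      have h0 : B.repr d 0 = (inner ℝ s d : ℝ) := by
        rw [B.repr_apply_apply]; congr 1
        simp [B, OrthonormalBasis.coe_mk]
      have h1 : B.repr d 1 = (inner ℝ l d : ℝ) := by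
        rw [B.repr_apply_apply]; congr 1
        simp [B, OrthonormalBasis.coe_mk]
      have hB0 : B 0 = s := by simp [B, OrthonormalBasis.coe_mk]
      have hB1 : B 1 = l := by simp [B, OrthonormalBasis.coe_mk]
      rw [h0, h1, hB0, hB1] at hsum
      exact hsum
    have hc : Continuous (fun u : ℝ => fA (Real.sqrt u)) :=
      (hfA.continuousOn).comp_continuous Real.continuous_sqrt (fun x => Real.sqrt_nonneg x)
    set H : ℝ → ℝ := fun t => ∫ u in (0:ℝ)..t, fA (Real.sqrt u) / 2 with hH
    refine ⟨fun d => H ((inner ℝ d d : ℝ)), fun d => ?_⟩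
    have hq : HasFDerivAt (fun d : EuclideanSpace ℝ (Fin 2) => (inner ℝ d d : ℝ))
        ((fderivInnerCLM ℝ (d, d)).comp ((ContinuousLinearMap.id ℝ (EuclideanSpace ℝ (Fin 2))).prod
          (ContinuousLinearMap.id ℝ (EuclideanSpace ℝ (Fin 2))))) d :=
      (hasFDerivAt_id d).inner ℝ (hasFDerivAt_id d)
    have hHd : HasDerivAt H (fA (Real.sqrt ((inner ℝ d d : ℝ))) / 2) ((inner ℝ d d : ℝ)) :=
      ((hc.div_const 2).integral_hasStrictDerivAt 0 _).hasDerivAt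
    have comp := hHd.comp_hasFDerivAt
      (f := fun d : EuclideanSpace ℝ (Fin 2) => (inner ℝ d d : ℝ)) d hq
    rw [hasGradientAt_iff_hasFDerivAt]
    refine comp.congr_fderiv ?_
    symm
    ext v
    have hsq : Real.sqrt ((inner ℝ d d : ℝ)) = ‖d‖ := by
      rw [real_inner_self_eq_norm_sq]
      exact Real.sqrt_sq (norm_nonneg d)
    simp only [toDual_apply_apply, ContinuousLinearMap.smul_apply, ContinuousLinearMap.coe_comp',
      Function.comp_apply, ContinuousLinearMap.prod_apply, ContinuousLinearMap.coe_id', id_eq,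
      fderivInnerCLM_apply, smul_eq_mul]
    rw [one_mul, hdecomp d, hsq, real_inner_smul_left, real_inner_comm v d]
    ring
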